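/- For every integer p ≥ 2, let G = (√(p+1)/√p)·I_p − (1/(√p·(√(p+1)−1)))·J_p with rows v₁, …, v_p, and for each j let η_j = v_j − P_j(v_j) be the component of v_j orthogonal to the span of the other rows. Then for every j ∈ {1, …, p}, the squared Euclidean norm of η_j equals (p+1)/(2p). -/

import Mathlib

open Matrix
open scoped RealInnerProductSpace
/-- The generator matrix of the lattice `A_p*`:
`G = (√(p+1)/√p) I_p − (1/(√p(√(p+1)−1))) J_p`. -/
noncomputable def AstarGen (p : ℕ) : Matrix (Fin p) (Fin p) ℝ :=
  (Real.sqrt (p + 1) / Real.sqrt p) • (1 : Matrix (Fin p) (Fin p) ℝ)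
    - (1 / (Real.sqrt p * (Real.sqrt (p + 1) - 1))) • Matrix.of (fun _ _ => (1 : ℝ))

lemma astar_inner (p : ℕ) (hp : 2 ≤ p) (v : Fin p → EuclideanSpace ℝ (Fin p))
    (hv : ∀ j k, v j k = AstarGen p j k) (k m : Fin p) :
    ⟪v k, v m⟫ = if k = m then 1 else -(1/(p:ℝ)) := by
  have hp0 : (0:ℝ) < p := by positivity
  set r := Real.sqrt p with hrdef
  set s := Real.sqrt (p+1) with hsdef
  have hr2 : r^2 = p := Real.sq_sqrt (by positivity)
  have hs2 : s^2 = (p:ℝ)+1 := by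
    rw [hsdef]
    rw [Real.sq_sqrt (by positivity)]
  have hr0 : 0 < r := Real.sqrt_pos.2 hp0
  have hs1 : 1 < s := by
    nlinarith [hs2, Real.sqrt_nonneg ((p:ℝ)+1)]
  set a := s / r with hadef
  set b := 1 / (r * (s - 1)) with hbdef
  have hvi : ∀ k i : Fin p, v k i = a * (if k = i then 1 else 0) - b := by
    intro k i
    rw [hv]
    simp only [AstarGen, Matrix.sub_apply, Matrix.smul_apply, Matrix.of_apply,
      Matrix.one_apply, smul_eq_mul]
    rw [← hadef, ← hbdef]
    split_ifs <;> ring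
  have hinner : ⟪v k, v m⟫ = ∑ i, v k i * v m i := by
    rw [PiLp.inner_apply]; simp [RCLike.inner_apply]; exact Finset.sum_congr rfl (fun _ _ => mul_comm _ _)
  have hrne : r ≠ 0 := ne_of_gt hr0
  have hs1' : s - 1 ≠ 0 := by intro h; nlinarith
  have hsne : r * (s-1) ≠ 0 := mul_ne_zero hrne hs1'
  rw [hinner]
  by_cases hkm : k = m
  · subst hkm
    have h1 : ∀ i : Fin p, v k i * v k i
        = (a^2 - 2*a*b) * (if k = i then 1 else 0) + b^2 := by
      intro i; rw [hvi]; split_ifs <;> ring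
    simp only [h1, mul_ite, mul_one, mul_zero, Finset.sum_add_distrib,
      Finset.sum_ite_eq, Finset.mem_univ, if_true, Finset.sum_const,
      Finset.card_univ, Fintype.card_fin, nsmul_eq_mul]
    rw [hadef, hbdef]
    field_simp
    linear_combination (r^4*(s-1)*((s-1)^2-1)) * hs2 - (r^4*(s-1)*(s-1)^2) * hr2 + ((-1)*r^2 + (-3)*r^6 + (-2)*s + (-2)*s*r^4 + s*r^6 + s^2 + 3*s^2*r^4 - s^3*r^4 + (p:ℝ) + 3*r^4*(p:ℝ) - s*r^4*(p:ℝ)) * hs2 + (2*s + 4*s*r^4 - 2 - 4*r^4 - (p:ℝ) - 3*r^4*(p:ℝ) + s*r^4*(p:ℝ)) * hr2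
  · have h1 : ∀ i : Fin p, v k i * v m i
        = (-(a*b)) * (if k = i then 1 else 0) + (-(a*b)) * (if m = i then 1 else 0) + b^2 := by
      intro i; rw [hvi, hvi]
      split_ifs with e1 e2
      · exact absurd (e1.trans e2.symm) hkm
      · ring
      · ring
      · ring
    simp only [h1, mul_ite, mul_one, mul_zero, Finset.sum_add_distrib,
      Finset.sum_ite_eq, Finset.mem_univ, if_true, Finset.sum_const,
      Finset.card_univ, Fintype.card_fin, nsmul_eq_mul, if_neg hkm]
    rw [hadef, hbdef]
    have hpne : (p:ℝ) ≠ 0 := ne_of_gt hp0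
    field_simp
    linear_combination (r^4*(s-1)^4) * hr2 - ((p:ℝ)*r^4*(s-1)^2) * hs2 + ((-2)*(p:ℝ) + 8*r^4*(p:ℝ) - 6*s*r^4*(p:ℝ) + 2*s^2*r^4*(p:ℝ) + r^4*(p:ℝ)^2 + r^2 - 7*r^6 + 4*s*r^6 - s^2*r^6 - r^6*(p:ℝ)) * hs2 + ((-2)*s + 8*s*r^4 + 2 - 8*r^4 + (p:ℝ) - 8*r^4*(p:ℝ) + 4*s*r^4*(p:ℝ) - r^4*(p:ℝ)^2) * hr2


/-- For the generator matrix of `A_p*` with rows `v j`, the component `η j` of `v j`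
orthogonal to the span of the other rows satisfies `‖η j‖² = (p+1)/(2p)`. -/
theorem AstarGen_eta_norm_sq (p : ℕ) (hp : 2 ≤ p)
    (v : Fin p → EuclideanSpace ℝ (Fin p)) (hv : ∀ j k, v j k = AstarGen p j k)
    (η : Fin p → EuclideanSpace ℝ (Fin p))
    (hη : ∀ j, η j = v j -
      (Submodule.orthogonalProjectionOnto (Submodule.span ℝ (v '' {k | k ≠ j})) (v j) : EuclideanSpace ℝ (Fin p)))
    (j : Fin p) :
    ‖η j‖ ^ 2 = ((p : ℝ) + 1) / (2 * p) := by
  have hp0 : (0:ℝ) < p := by positivity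
  have hpne : (p:ℝ) ≠ 0 := ne_of_gt hp0
  have hA := astar_inner p hp v hv
  set S := Submodule.span ℝ (v '' {k | k ≠ j}) with hS
  set u : EuclideanSpace ℝ (Fin p) := (2:ℝ)⁻¹ • (v j + ∑ k, v k) with hu
  have hcol : ∀ m, (∑ k, ⟪v k, v m⟫) = 1/p := by
    intro m
    have : ∀ k, ⟪v k, v m⟫ = -(1/p) + (if k = m then (1:ℝ)+1/p else 0) := by
      intro k; rw [hA]; split_ifs <;> ring
    simp only [this, Finset.sum_add_distrib, Finset.sum_const, Finset.card_univ,
      Fintype.card_fin, nsmul_eq_mul, Finset.sum_ite_eq', Finset.mem_univ, if_true]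
    field_simp
    ring
  have huv : ∀ m, ⟪u, v m⟫ = if j = m then ((p:ℝ)+1)/(2*p) else 0 := by
    intro m
    rw [hu, real_inner_smul_left, inner_add_left, sum_inner, hcol, hA]
    split_ifs <;> field_simp <;> ring
  have hu_orth : u ∈ Sᗮ := by
    rw [hS]
    intro x hx
    refine Submodule.span_induction ?_ ?_ ?_ ?_ hx
    · rintro x ⟨k, hk, rfl⟩
      rw [real_inner_comm, huv, if_neg]
      exact fun h => hk h.symm
    · simp
    · intro a b _ _ ha hb; rw [inner_add_left, ha, hb]; ring
    · intro c a _ ha; rw [real_inner_smul_left, ha]; ring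
  have hmem : v j - u ∈ S := by
    have heq : v j - u = ∑ k ∈ Finset.univ.erase j, (-(2:ℝ)⁻¹) • v k := by
      rw [← Finset.smul_sum, Finset.sum_erase_eq_sub (Finset.mem_univ j), hu]
      module
    rw [heq]
    refine Submodule.sum_mem _ ?_
    intro k hk
    refine Submodule.smul_mem _ _ (Submodule.subset_span ⟨k, ?_, rfl⟩)
    exact Finset.ne_of_mem_erase hk
  have hproj : (Submodule.orthogonalProjectionOnto S (v j) : EuclideanSpace ℝ (Fin p)) = v j - u := by
    refine Submodule.eq_starProjection_of_mem_orthogonal hmem ?_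
    simpa using hu_orth
  have hetaj : η j = u := by rw [hη, hproj]; abel
  have hnorm : ⟪u, u⟫ = ((p:ℝ)+1)/(2*p) := by
    nth_rewrite 2 [hu]
    rw [real_inner_smul_right, inner_add_right, inner_sum]
    have hsum : (∑ k, ⟪u, v k⟫) = ((p:ℝ)+1)/(2*p) := by
      simp only [huv, Finset.sum_ite_eq, Finset.mem_univ, if_true]
    rw [hsum, huv, if_pos rfl]
    ring
  rw [hetaj, ← real_inner_self_eq_norm_sq, hnorm]
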